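/- For a finite commutative ring R with identity 1 ≠ 0 and |R| = l ≥ 2, the number of zero-product pairs satisfies |Ann| ≤ l²/2 + 1, and hence P(R) ≤ 1/2 + 1/l². -/

import Mathlib

theorem stmt_11 (R : Type*) [CommRing R] [Fintype R] [Nontrivial R] [DecidableEq R]
    (l : ℕ) (hl : Fintype.card R = l) (hl2 : 2 ≤ l) :
    2 * (Finset.univ.filter fun p : R × R => p.1 * p.2 = 0).card ≤ l ^ 2 + 2 ∧
    ((Finset.univ.filter fun p : R × R => p.1 * p.2 = 0).card : ℚ) / (l : ℚ) ^ 2 ≤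
      1 / 2 + 1 / (l : ℚ) ^ 2 := by
  have hl0 : 0 < l := by omega
  set A : R → Finset R := fun x => Finset.univ.filter (fun y => x * y = 0) with hA
  have hsplit : (Finset.univ.filter fun p : R × R => p.1 * p.2 = 0).card
      = ∑ x : R, (A x).card := by
    rw [Finset.card_eq_sum_card_fiberwise (f := Prod.fst)
      (t := (Finset.univ : Finset R)) (fun x _ => Finset.mem_univ _)]
    refine Finset.sum_congr rfl (fun x _ => ?_)
    rw [hA]
    apply Finset.card_nbij' (fun p => p.2) (fun y => (x, y))
    · intro p hp
      simp only [Finset.mem_coe, Finset.mem_filter, Finset.mem_univ, true_and] at hp ⊢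
      rw [← hp.2]; exact hp.1
    · intro y hy
      simp only [Finset.mem_coe, Finset.mem_filter, Finset.mem_univ, true_and] at hy ⊢
      exact ⟨hy, trivial⟩
    · intro p hp
      simp only [Finset.mem_coe, Finset.mem_filter, Finset.mem_univ, true_and] at hp
      rw [← hp.2]
    · intro y _; rfl
  -- key bound for x ≠ 0
  have key : ∀ x : R, x ≠ 0 → 2 * (A x).card ≤ l := by
    intro x hx
    set S : AddSubgroup R :=
      { carrier := {y | x * y = 0}
        zero_mem' := by simp
        add_mem' := by intro a b ha hb; simp only [Set.mem_setOf_eq] at *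
                       rw [mul_add, ha, hb, add_zero]
        neg_mem' := by intro a ha; simp only [Set.mem_setOf_eq] at *
                       rw [mul_neg, ha, neg_zero] } with hS
    haveI : DecidablePred (· ∈ S) := Classical.decPred _
    have hcard : (A x).card = Nat.card S := by
      rw [Nat.card_eq_fintype_card, Fintype.card_subtype]
      congr 1
      apply Finset.filter_congr
      intro y _
      rfl
    have hdvd : Nat.card S ∣ l := by
      have := AddSubgroup.card_addSubgroup_dvd_card S
      rwa [Nat.card_eq_fintype_card (α := R), hl] at this
    have hne : Nat.card S ≠ l := by
      intro h
      have hAu : A x = Finset.univ := by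
        apply Finset.eq_univ_of_card
        rw [hcard, h, ← hl]
      have h1 : (1 : R) ∈ A x := hAu ▸ Finset.mem_univ 1
      rw [hA] at h1
      simp only [Finset.mem_filter, mul_one] at h1
      exact hx h1.2
    obtain ⟨k, hk⟩ := hdvd
    have hS0 : 0 < Nat.card S := Nat.card_pos
    have hk2 : 2 ≤ k := by
      rcases Nat.lt_or_ge k 2 with h | h
      · interval_cases k <;> omega
      · exact h
    rw [hcard]
    calc 2 * Nat.card S ≤ k * Nat.card S := Nat.mul_le_mul_right _ hk2
      _ = l := by rw [hk]; ring
  -- first part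
  have h1 : 2 * (Finset.univ.filter fun p : R × R => p.1 * p.2 = 0).card ≤ l ^ 2 + 2 := by
    rw [hsplit, Finset.mul_sum]
    have hsum : ∑ x : R, 2 * (A x).card
        ≤ ∑ x : R, (if x = 0 then 2 * l else if x = 1 then 2 else l) := by
      apply Finset.sum_le_sum
      intro x _
      by_cases h0 : x = 0
      · rw [h0, if_pos rfl]
        have : (A (0 : R)).card ≤ l := by
          rw [← hl, ← Finset.card_univ]; exact Finset.card_filter_le _ _
        omega
      · rw [if_neg h0]
        by_cases hx1 : x = 1
        · have hone : A x = {0} := by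
            ext y; simp [hA, hx1]
          rw [if_pos hx1, hone]; simp
        · rw [if_neg hx1]; exact key x h0
    refine hsum.trans (le_of_eq ?_)
    have h01 : ((0:R) : R) ≠ 1 := zero_ne_one
    rw [← Finset.sum_sdiff (Finset.subset_univ ({0, 1} : Finset R)), Finset.sum_pair h01]
    have hrest : ∑ x ∈ Finset.univ \ ({0,1} : Finset R),
        (if x = 0 then 2 * l else if x = 1 then 2 else l)
        = ∑ _x ∈ Finset.univ \ ({0,1} : Finset R), l := by
      refine Finset.sum_congr rfl (fun x hx => ?_)
      simp only [Finset.mem_sdiff, Finset.mem_insert, Finset.mem_singleton, not_or] at hx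
      rw [if_neg hx.2.1, if_neg hx.2.2]
    rw [hrest, Finset.sum_const, smul_eq_mul,
      Finset.card_sdiff_of_subset (Finset.subset_univ _), Finset.card_pair h01, Finset.card_univ, hl]
    simp only [if_pos rfl, one_ne_zero, if_neg, if_false, ite_true, ite_false, if_true]
    obtain ⟨k, rfl⟩ := Nat.exists_eq_add_of_le hl2
    simp only [Nat.add_sub_cancel_left]
    ring_nf
  refine ⟨h1, ?_⟩
  have hlq : (0 : ℚ) < (l : ℚ) ^ 2 := by positivity
  rw [div_le_iff₀ hlq]
  have hcast : (2 : ℚ) * ((Finset.univ.filter fun p : R × R => p.1 * p.2 = 0).card : ℚ)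
      ≤ (l : ℚ) ^ 2 + 2 := by exact_mod_cast h1
  have h2 : ((Finset.univ.filter fun p : R × R => p.1 * p.2 = 0).card : ℚ)
      ≤ ((l : ℚ) ^ 2 + 2) / 2 := by linarith
  calc ((Finset.univ.filter fun p : R × R => p.1 * p.2 = 0).card : ℚ)
      ≤ ((l : ℚ) ^ 2 + 2) / 2 := h2
    _ = (1 / 2 + 1 / (l : ℚ) ^ 2) * (l : ℚ) ^ 2 := by field_simp
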